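/- arXiv:1712.10178 — 2 statements merged into one kernel-verified Lean document; each statement's English description precedes it below -/
import Mathlib

section
/- Let F be a field of characteristic 2 with 2-basis α₁,…,αₙ, and for each d ∈ {0,1}ⁿ let V_d ⊆ F be the F²-subspace D(B_d') ∪ {0} as follows: V₀ is the F²-span of {α^e : e ∈ {0,1}ⁿ, e ≠ 0}, and for d ≠ 0, V_d is the F²-span of {α^e : e ∈ {0,1}ⁿ ∖ {0,d}} ∪ {1 + α^d}. Then ⋂_{d ∈ {0,1}ⁿ} V_d = {0}. -/
/-- The subfield of squares `F²` of a field of characteristic 2. -/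
def sqSubfield (F : Type*) [Field F] [CharP F 2] : Subfield F where
  carrier := {x | ∃ y : F, y ^ 2 = x}
  mul_mem' := by rintro a b ⟨y, rfl⟩ ⟨z, rfl⟩; exact ⟨y * z, by ring⟩
  one_mem' := ⟨1, one_pow 2⟩
  add_mem' := by
    rintro a b ⟨y, rfl⟩ ⟨z, rfl⟩
    exact ⟨y + z, by rw [add_sq]; linear_combination (y*z) * (CharP.cast_eq_zero F 2)⟩
  zero_mem' := ⟨0, by ring⟩
  neg_mem' := by rintro a ⟨y, rfl⟩; exact ⟨y, (CharTwo.neg_eq _).symm⟩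
  inv_mem' := by rintro a ⟨y, rfl⟩; exact ⟨y⁻¹, by rw [inv_pow]⟩

/-- The monomial `β₁^{d₁} ⋯ βₙ^{dₙ}`. -/
def mono {R : Type*} [CommRing R] {n : ℕ} (β : Fin n → R) (d : Fin n → Bool) : R :=
  ∏ i, if d i then β i else 1

/-- The diagonal bilinear `n`-fold Pfister form `⟨⟨β₁,…,βₙ⟩⟩_b`. -/
def bPf (F : Type*) [Field F] {n : ℕ} (β : Fin n → F) (v w : (Fin n → Bool) → F) : F :=
  ∑ d, mono β d * v d * w d

/-- Pure part of the bilinear Pfister form. -/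
def bPfPure (F : Type*) [Field F] {n : ℕ} (β : Fin n → F)
    (v w : {d : Fin n → Bool // d ≠ fun _ => false} → F) : F :=
  ∑ d, mono β d.1 * v d * w d

/-- Anisotropy of a bilinear form. -/
def BAniso (F : Type*) [Field F] {V : Type*} [AddCommGroup V] [Module F V]
    (B : V → V → F) : Prop :=
  ∀ v : V, v ≠ 0 → B v v ≠ 0

/-- Isometry of bilinear forms. -/
def BilinIsom (F : Type*) [Field F] {V W : Type*} [AddCommGroup V] [Module F V]
    [AddCommGroup W] [Module F W] (B₁ : V → V → F) (B₂ : W → W → F) : Prop :=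
  ∃ e : V ≃ₗ[F] W, ∀ v w, B₂ (e v) (e w) = B₁ v w

/-- Isometry of quadratic forms (given as value functions). -/
def QuadIsom (F : Type*) [Field F] {V W : Type*} [AddCommGroup V] [Module F V]
    [AddCommGroup W] [Module F W] (q₁ : V → F) (q₂ : W → F) : Prop :=
  ∃ e : V ≃ₗ[F] W, ∀ v, q₂ (e v) = q₁ v

/-- The quadratic Pfister form `⟨⟨β₁,…,β_m, a]]` as a value function. -/
def qPf (R : Type*) [CommRing R] {m : ℕ} (β : Fin m → R) (a : R)
    (x : (Fin m → Bool) → R × R) : R :=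
  ∑ e, mono β e * ((x e).1 ^ 2 + (x e).1 * (x e).2 + a * (x e).2 ^ 2)

/-- Minimal index where `d` is `true`. -/
noncomputable def minIdx {n : ℕ} (d : Fin n → Bool) (hd : d ≠ fun _ => false) : Fin n :=
  (Finset.univ.filter fun i => d i = true).min' (by
    obtain ⟨i, hi⟩ := Function.ne_iff.mp hd
    exact ⟨i, Finset.mem_filter.mpr ⟨Finset.mem_univ i, by simpa using hi⟩⟩)

/-- Remove the `ℓ`-th entry from a tuple. -/
def removeIdx {R : Type*} {n : ℕ} (α : Fin n → R) (ℓ : Fin n) (i : Fin (n - 1)) : R :=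
  if h : (i : ℕ) < (ℓ : ℕ) then α ⟨i, by omega⟩ else α ⟨(i : ℕ) + 1, by omega⟩

/-- First `n-1` entries of a tuple. -/
def front {R : Type*} {n : ℕ} (α : Fin n → R) (i : Fin (n - 1)) : R :=
  α ⟨i, by omega⟩

/-- Last entry of a tuple (junk value `0` if the tuple is empty). -/
def qlast {R : Type*} [CommRing R] {n : ℕ} (α : Fin n → R) : R :=
  if h : n = 0 then 0 else α ⟨n - 1, by omega⟩

/-- The `F²`-subspace `V_d = D(B_d') ∪ {0}`: for `d = 0` the span of the monomials
`α^e`, `e ≠ 0`; for `d ≠ 0` the span of `{α^e : e ∉ {0, d}} ∪ {1 + α^d}`. -/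
noncomputable def Vsub (F : Type*) [Field F] [CharP F 2] {n : ℕ} (α : Fin n → F)
    (d : Fin n → Bool) : Submodule (sqSubfield F) F :=
  if d = fun _ => false then
    Submodule.span (sqSubfield F)
      {x : F | ∃ e : Fin n → Bool, e ≠ (fun _ => false) ∧ mono α e = x}
  else
    Submodule.span (sqSubfield F)
      ({x : F | ∃ e : Fin n → Bool, e ≠ (fun _ => false) ∧ e ≠ d ∧ mono α e = x}
        ∪ {1 + mono α d})

section Aux

variable {F : Type*} [Field F] [CharP F 2] {n : ℕ}

lemma mono_zero (α : Fin n → F) : mono α (fun _ => false) = 1 := by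
  simp [mono]

lemma mono_single (α : Fin n → F) (i : Fin n) :
    mono α (fun j => decide (j = i)) = α i := by
  unfold mono
  rw [Finset.prod_eq_single i]
  · simp
  · intro j _ hj; simp [hj]
  · simp

lemma mono_mul (α : Fin n → F) (e e' : Fin n → Bool) :
    mono α e * mono α e' =
      (∏ i, if e i && e' i then α i else 1) ^ 2 * mono α (fun i => xor (e i) (e' i)) := by
  unfold mono
  rw [← Finset.prod_pow, ← Finset.prod_mul_distrib, ← Finset.prod_mul_distrib]
  apply Finset.prod_congr rfl
  intro i _
  cases h1 : e i <;> cases h2 : e' i <;> simp [h1, h2] <;> ring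

lemma mono_span_top (α : Fin n → F)
    (hadj : IntermediateField.adjoin (sqSubfield F) (Set.range α) = ⊤)
    (hrk : Module.finrank (sqSubfield F) F = 2 ^ n) :
    Submodule.span (sqSubfield F) (Set.range (mono α)) = ⊤ := by
  have hF2 : FiniteDimensional (sqSubfield F) F :=
    FiniteDimensional.of_finrank_pos (by rw [hrk]; positivity)
  set p := Submodule.span (sqSubfield F) (Set.range (mono α)) with hp
  have h_one : (1 : F) ∈ p := by
    rw [← mono_zero α]
    exact Submodule.subset_span ⟨_, rfl⟩
  have h_mul : ∀ x y, x ∈ p → y ∈ p → x * y ∈ p := by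
    have hle : p * p ≤ p := by
      rw [hp, Submodule.span_mul_span, Submodule.span_le]
      rintro z ⟨x, ⟨e, rfl⟩, y, ⟨e', rfl⟩, rfl⟩
      show mono α e * mono α e' ∈ Submodule.span (sqSubfield F) (Set.range (mono α))
      rw [mono_mul]
      have hc : ((∏ i, if e i && e' i then α i else 1) ^ 2 : F) ∈ sqSubfield F :=
        ⟨∏ i, if e i && e' i then α i else 1, rfl⟩
      have := Submodule.smul_mem (Submodule.span (sqSubfield F) (Set.range (mono α)))
        (⟨_, hc⟩ : sqSubfield F)
        (Submodule.subset_span (Set.mem_range_self (fun i => xor (e i) (e' i))))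
      rw [Algebra.smul_def] at this
      exact this
    intro x y hx hy
    exact hle (Submodule.mul_mem_mul hx hy)
  let S : Subalgebra (sqSubfield F) F := p.toSubalgebra h_one h_mul
  have halg : Algebra.adjoin (sqSubfield F) (Set.range α) = ⊤ := by
    have h := IntermediateField.adjoin_toSubalgebra_of_isAlgebraic
      (F := sqSubfield F) (E := F) (S := Set.range α)
      (fun x _ => Algebra.IsAlgebraic.isAlgebraic x)
    rw [hadj, IntermediateField.top_toSubalgebra] at h
    exact h.symm
  have hS : (⊤ : Subalgebra (sqSubfield F) F) ≤ S := by
    rw [← halg]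
    apply Algebra.adjoin_le
    rintro _ ⟨i, rfl⟩
    show α i ∈ p
    rw [← mono_single α i]
    exact Submodule.subset_span ⟨_, rfl⟩
  rw [eq_top_iff]
  intro x _
  exact hS (Algebra.mem_top)

end Aux

/-- for a 2-basis `α₁,…,αₙ` of `F`, the intersection of the
subspaces `V_d`, `d ∈ {0,1}ⁿ`, is trivial. -/
theorem stmt_6 (F : Type*) [Field F] [CharP F 2] (n : ℕ)
    (α : Fin n → F)
    (hadj : IntermediateField.adjoin (sqSubfield F) (Set.range α) = ⊤)
    (hrk : Module.finrank (sqSubfield F) F = 2 ^ n) :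
    (⨅ d : Fin n → Bool, Vsub F α d) = ⊥ := by
  classical
  have hspan := mono_span_top α hadj hrk
  have hcard : Fintype.card (Fin n → Bool) = Module.finrank (sqSubfield F) F := by
    simp [hrk]
  set B := basisOfTopLeSpanOfCardEqFinrank (mono α) hspan.ge hcard with hBdef
  have hB : ⇑B = mono α := coe_basisOfTopLeSpanOfCardEqFinrank (mono α) hspan.ge hcard
  have hco : ∀ e e' : Fin n → Bool, B.coord e' (mono α e) = if e = e' then 1 else 0 := by
    intro e e'
    rw [← hB]
    simp [Module.Basis.coord_apply, Finsupp.single_apply]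
  have h2 : (1 : sqSubfield F) + 1 = 0 := by
    apply Subtype.ext
    push_cast
    linear_combination (CharP.cast_eq_zero F 2)
  rw [eq_bot_iff]
  intro x hx
  simp only [Submodule.mem_iInf] at hx
  have h0 : B.coord (fun _ => false) x = 0 := by
    have hx0 := hx (fun _ => false)
    simp only [Vsub, if_pos rfl] at hx0
    have key : Submodule.span (sqSubfield F)
        {y : F | ∃ e : Fin n → Bool, e ≠ (fun _ => false) ∧ mono α e = y} ≤
        LinearMap.ker (B.coord (fun _ => false)) := by
      rw [Submodule.span_le]
      rintro y ⟨e, he0, rfl⟩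
      simp [LinearMap.mem_ker, hco, he0]
    exact LinearMap.mem_ker.mp (key hx0)
  have hd : ∀ d : Fin n → Bool, d ≠ (fun _ => false) → B.coord d x = 0 := by
    intro d hdne
    have hxd := hx d
    simp only [Vsub, if_neg hdne] at hxd
    have key : Submodule.span (sqSubfield F)
        ({y : F | ∃ e : Fin n → Bool, e ≠ (fun _ => false) ∧ e ≠ d ∧ mono α e = y}
          ∪ {1 + mono α d}) ≤
        LinearMap.ker (B.coord (fun _ => false) + B.coord d) := by
      rw [Submodule.span_le]
      rintro y (⟨e, he0, hed, rfl⟩ | rfl)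
      · simp [LinearMap.mem_ker, hco, he0, hed]
      · have : (1 : F) + mono α d = mono α (fun _ => false) + mono α d := by
          rw [mono_zero]
        rw [SetLike.mem_coe, LinearMap.mem_ker, this]
        simp only [LinearMap.add_apply, map_add, hco]
        rw [if_pos trivial, if_neg (Ne.symm hdne), if_neg hdne]
        linear_combination h2
    have hker := LinearMap.mem_ker.mp (key hxd)
    simp only [LinearMap.add_apply] at hker
    rw [h0, zero_add] at hker
    exact hker
  have hall : ∀ e, B.coord e x = 0 := by
    intro e
    by_cases he : e = fun _ => false
    · rw [he]; exact h0
    · exact hd e he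
  rw [Submodule.mem_bot]
  exact B.forall_coord_eq_zero_iff.mp hall
end

section
/- Let F be a field of characteristic 2 with valuation v onto a totally ordered group Γ, α₁,…,αₙ ∈ F× with negative values and 𝔽₂-independent classes in Γ/2Γ, and φ = ⟨⟨α₁,…,α_{n−1},αₙ]] on the vector space V. Then every 2-dimensional F-subspace U of V contains a vector u with φ(u) ≠ 0 and v̄(φ(u)) ≠ 0 in Γ/2Γ. -/
set_option linter.unusedSectionVars false
set_option maxHeartbeats 1000000

section Aux

variable {F Γ : Type*} [Field F] [CharP F 2] [AddCommGroup Γ] [LinearOrder Γ] [IsOrderedAddMonoid Γ]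
variable (v : F → Γ)

lemma aux_v_one (hmul : ∀ x y : F, x ≠ 0 → y ≠ 0 → v (x * y) = v x + v y) : v 1 = 0 := by
  have h := hmul 1 1 one_ne_zero one_ne_zero
  rw [mul_one] at h
  have h2 : v 1 + 0 = v 1 + v 1 := by rw [add_zero]; exact h
  exact (add_left_cancel h2).symm

lemma aux_key_add
    (hadd : ∀ x y : F, x ≠ 0 → y ≠ 0 → x + y ≠ 0 → min (v x) (v y) ≤ v (x + y))
    (x y : F) (hx : x ≠ 0) (hy : y = 0 ∨ (y ≠ 0 ∧ v x < v y)) :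
    x + y ≠ 0 ∧ v (x + y) = v x := by
  rcases hy with rfl | ⟨hy0, hlt⟩
  · rw [add_zero]; exact ⟨hx, rfl⟩
  · have hne : x + y ≠ 0 := by
      intro h
      have hyx : y = x := by
        have h1 : y = -x := eq_neg_of_add_eq_zero_right h
        rw [h1, CharTwo.neg_eq]
      rw [hyx] at hlt
      exact lt_irrefl _ hlt
    refine ⟨hne, le_antisymm ?_ ?_⟩
    · have hxy : x = (x + y) + y := by
        rw [add_assoc, CharTwo.add_self_eq_zero, add_zero]
      by_contra hgt
      push_neg at hgt
      have h2 := hadd (x + y) y hne hy0 (by rw [← hxy]; exact hx)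
      rw [← hxy] at h2
      exact absurd h2 (not_le.mpr (lt_min hgt hlt))
    · have h := hadd x y hx hy0 hne
      rwa [min_eq_left hlt.le] at h

lemma aux_key_sum
    (hadd : ∀ x y : F, x ≠ 0 → y ≠ 0 → x + y ≠ 0 → min (v x) (v y) ≤ v (x + y))
    {ι : Type*} (s : Finset ι) (f : ι → F) (x : F) (hx : x ≠ 0)
    (h : ∀ i ∈ s, f i = 0 ∨ (f i ≠ 0 ∧ v x < v (f i))) :
    x + ∑ i ∈ s, f i ≠ 0 ∧ v (x + ∑ i ∈ s, f i) = v x := by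
  classical
  induction s using Finset.induction_on with
  | empty => rw [Finset.sum_empty, add_zero]; exact ⟨hx, rfl⟩
  | insert a s ha ih =>
    rw [Finset.sum_insert ha]
    obtain ⟨h1, h2⟩ := ih (fun i hi => h i (Finset.mem_insert_of_mem hi))
    have hre : x + (f a + ∑ i ∈ s, f i) = (x + ∑ i ∈ s, f i) + f a := by ring
    rw [hre]
    have hfa : f a = 0 ∨ (f a ≠ 0 ∧ v (x + ∑ i ∈ s, f i) < v (f a)) := by
      rcases h a (Finset.mem_insert_self a s) with h0 | ⟨h0, hlt⟩
      · exact Or.inl h0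
      · exact Or.inr ⟨h0, by rw [h2]; exact hlt⟩
    obtain ⟨h3, h4⟩ := aux_key_add v hadd _ _ h1 hfa
    exact ⟨h3, by rw [h4, h2]⟩

lemma aux_v_prod (hmul : ∀ x y : F, x ≠ 0 → y ≠ 0 → v (x * y) = v x + v y)
    {ι : Type*} (s : Finset ι) (g : ι → F) (hg : ∀ i ∈ s, g i ≠ 0) :
    v (∏ i ∈ s, g i) = ∑ i ∈ s, v (g i) := by
  classical
  induction s using Finset.induction_on with
  | empty => simpa using aux_v_one v hmul
  | insert a s ha ih =>
    rw [Finset.prod_insert ha, Finset.sum_insert ha,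
      hmul _ _ (hg a (Finset.mem_insert_self a s))
        (Finset.prod_ne_zero_iff.mpr fun i hi => hg i (Finset.mem_insert_of_mem hi)),
      ih (fun i hi => hg i (Finset.mem_insert_of_mem hi))]

end Aux


/-- under the hypotheses of the CGV lemma, every 2-dimensional
subspace `U` of the underlying space of `φ = ⟨⟨α₁,…,α_{n-1},αₙ]]` contains a
vector `u` with `φ(u) ≠ 0` and `v̄(φ(u)) ≠ 0` in `Γ/2Γ`. -/
theorem stmt_13 (F Γ : Type*) [Field F] [CharP F 2]
    [AddCommGroup Γ] [LinearOrder Γ] [IsOrderedAddMonoid Γ] (v : F → Γ)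
    (hmul : ∀ x y : F, x ≠ 0 → y ≠ 0 → v (x * y) = v x + v y)
    (hadd : ∀ x y : F, x ≠ 0 → y ≠ 0 → x + y ≠ 0 → min (v x) (v y) ≤ v (x + y))
    (hsurj : ∀ g : Γ, ∃ x : F, x ≠ 0 ∧ v x = g)
    (n : ℕ) (hn : 1 ≤ n) (α : Fin n → F) (hα0 : ∀ i, α i ≠ 0)
    (hneg : ∀ i, v (α i) < 0)
    (hind : ∀ c : Fin n → Bool, (∃ i, c i = true) →
      ∀ h : Γ, (∑ i, if c i then v (α i) else 0) ≠ 2 • h)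
    (U : Submodule F ((Fin (n - 1) → Bool) → F × F))
    (hU : Module.finrank F U = 2) :
    ∃ u ∈ U, qPf F (front α) (qlast α) u ≠ 0 ∧
      ∀ h : Γ, v (qPf F (front α) (qlast α) u) ≠ 2 • h := by
  classical
  obtain ⟨m, rfl⟩ : ∃ m, n = m + 1 := ⟨n - 1, by omega⟩
  set β : Fin m → F := front α with hβ
  set A : F := qlast α with hA
  have hA_eq : A = α (Fin.last m) := by
    rw [hA, qlast, dif_neg (by omega : ¬ m + 1 = 0)]
    rfl
  have hβ_eq : ∀ i : Fin m, β i = α i.castSucc := fun i => rfl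
  have hAne : A ≠ 0 := by rw [hA_eq]; exact hα0 _
  -- Step A : find u ∈ U, u ≠ 0 with first coordinate of the trivial index zero
  have hUfin : FiniteDimensional F U := Module.finite_of_finrank_pos (by omega)
  set z : Fin m → Bool := (fun _ => false) with hz
  let f : U →ₗ[F] F := {
    toFun := fun x => (x.1 z).1
    map_add' := fun x y => by simp
    map_smul' := fun c x => by simp }
  obtain ⟨x, hxker, hx0⟩ : ∃ x : ↥U, x ∈ LinearMap.ker f ∧ x ≠ 0 := by
    have h1 := LinearMap.finrank_range_add_finrank_ker f
    have h2 : Module.finrank F (LinearMap.range f) ≤ 1 :=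
      le_trans (Submodule.finrank_le (LinearMap.range f)) (le_of_eq (Module.finrank_self F))
    have h3 : LinearMap.ker f ≠ ⊥ := by
      intro hbot
      rw [hbot, finrank_bot] at h1
      omega
    obtain ⟨x, hx, hx0⟩ := (Submodule.ne_bot_iff _).mp h3
    exact ⟨x, hx, hx0⟩
  set u : (Fin m → Bool) → F × F := x.1 with hu
  have hu0 : (u z).1 = 0 := LinearMap.mem_ker.mp hxker
  have humem : u ∈ U := x.2
  have hune : u ≠ 0 := fun h => hx0 (Subtype.ext h)
  -- terms
  set t : (Fin m → Bool) × Fin 3 → F := fun w =>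
    if w.2 = 0 then mono β w.1 * (u w.1).1 ^ 2
    else if w.2 = 1 then mono β w.1 * (u w.1).1 * (u w.1).2
    else mono β w.1 * A * (u w.1).2 ^ 2 with ht_def
  have ht0 : ∀ e, t (e, 0) = mono β e * (u e).1 ^ 2 := fun e => rfl
  have ht1 : ∀ e, t (e, 1) = mono β e * (u e).1 * (u e).2 := fun e => rfl
  have ht2 : ∀ e, t (e, 2) = mono β e * A * (u e).2 ^ 2 := fun e => rfl
  have hsum : qPf F β A u = ∑ w : (Fin m → Bool) × Fin 3, t w := by
    rw [qPf, Fintype.sum_prod_type]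
    refine Finset.sum_congr rfl fun e _ => ?_
    rw [Fin.sum_univ_three, ht0, ht1, ht2]
    ring
  have hmono0 : ∀ e, mono β e ≠ 0 := by
    intro e
    refine Finset.prod_ne_zero_iff.mpr fun i _ => ?_
    split
    · rw [hβ_eq]; exact hα0 _
    · exact one_ne_zero
  have hvmono : ∀ e, v (mono β e) = ∑ i : Fin m, if e i then v (β i) else 0 := by
    intro e
    rw [mono, aux_v_prod v hmul _ _ (fun i _ => by
      split
      exacts [hα0 _, one_ne_zero])]
    refine Finset.sum_congr rfl fun i _ => ?_
    split
    · rfl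
    · exact aux_v_one v hmul
  -- classes
  set S : (Fin (m + 1) → Bool) → Γ := fun c => ∑ i, if c i then v (α i) else 0 with hS
  set cl : (Fin m → Bool) × Fin 3 → (Fin (m + 1) → Bool) := fun w i =>
    if h : (i : ℕ) < m then w.1 ⟨i, h⟩ else decide (w.2 = 2) with hcl
  have hcl_cast : ∀ w (i : Fin m), cl w (Fin.castSucc i) = w.1 i := by
    intro w i
    have h : ((Fin.castSucc i : Fin (m + 1)) : ℕ) < m := by simpa using i.isLt
    rw [hcl]
    dsimp only
    rw [dif_pos h]
    congr 1
  have hcl_last : ∀ w, cl w (Fin.last m) = decide (w.2 = 2) := by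
    intro w
    rw [hcl]
    dsimp only
    rw [dif_neg (by simp)]
  have hclass : ∀ w : (Fin m → Bool) × Fin 3, w.2 ≠ 1 → t w ≠ 0 →
      ∃ γ : Γ, v (t w) = S (cl w) + 2 • γ := by
    rintro ⟨e, j⟩ hj ht
    have hScast : ∀ j', S (cl (e, j')) =
        (∑ i : Fin m, if e i then v (β i) else 0)
          + (if (decide (j' = (2:Fin 3))) then v (α (Fin.last m)) else 0) := by
      intro j'
      rw [hS]
      dsimp only
      rw [Fin.sum_univ_castSucc]
      congr 1
      · refine Finset.sum_congr rfl fun i _ => ?_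
        rw [hcl_cast, hβ_eq i]
      · rw [hcl_last]
    have hj' : j = 0 ∨ j = 2 := by
      have h1 : (j : ℕ) ≠ 1 := fun h => hj (Fin.ext h)
      have h2 := j.isLt
      have h3 : (j : ℕ) = 0 ∨ (j : ℕ) = 2 := by omega
      rcases h3 with h | h
      · exact Or.inl (Fin.ext h)
      · exact Or.inr (Fin.ext h)
    rcases hj' with rfl | rfl
    · -- j = 0
      have hp : (u e).1 ≠ 0 := by
        intro h
        exact ht (by rw [ht0, h]; ring)
      refine ⟨v (u e).1, ?_⟩
      rw [ht0, hmul _ _ (hmono0 e) (pow_ne_zero 2 hp), sq, hmul _ _ hp hp,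
        hvmono, hScast, two_smul]
      simp
    · -- j = 2
      have hq : (u e).2 ≠ 0 := by
        intro h
        exact ht (by rw [ht2, h]; ring)
      refine ⟨v (u e).2, ?_⟩
      rw [ht2, hmul _ _ (mul_ne_zero (hmono0 e) hAne) (pow_ne_zero 2 hq),
        hmul _ _ (hmono0 e) hAne, sq, hmul _ _ hq hq, hvmono, hScast, two_smul, hA_eq]
      simp
  -- XOR lemma
  have hSsub : ∀ c c' : Fin (m + 1) → Bool,
      S c - S c' = S (fun i => c i != c' i) - 2 • S (fun i => c' i && !(c i)) := by
    intro c c'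
    rw [hS]
    dsimp only
    rw [Finset.smul_sum, ← Finset.sum_sub_distrib, ← Finset.sum_sub_distrib]
    refine Finset.sum_congr rfl fun i _ => ?_
    rcases Bool.eq_false_or_eq_true (c i) with hci | hci <;> rcases Bool.eq_false_or_eq_true (c' i) with hc'i | hc'i <;> simp [hci, hc'i, two_smul] <;> abel
  have hne_of_class : ∀ c c' : Fin (m + 1) → Bool, c ≠ c' →
      ∀ γ γ' : Γ, S c + 2 • γ ≠ S c' + 2 • γ' := by
    intro c c' hcc γ γ' heq
    obtain ⟨i, hi⟩ := Function.ne_iff.mp hcc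
    have hx : (c i != c' i) = true := by
      cases hci : c i <;> cases hc'i : c' i <;> simp_all
    have h1 : S c - S c' = 2 • γ' - 2 • γ := by
      rw [sub_eq_sub_iff_add_eq_add]
      exact heq.trans (add_comm _ _)
    have h2 := hSsub c c'
    have h3 : S (fun i => c i != c' i) =
        2 • (γ' - γ + S (fun i => c' i && !(c i))) := by
      rw [smul_add, smul_sub, ← h1, h2]
      abel
    exact hind _ ⟨i, hx⟩ _ h3
  -- nonempty set of nonzero diagonal terms
  set D : Finset ((Fin m → Bool) × Fin 3) :=
    Finset.univ.filter fun w => w.2 ≠ 1 ∧ t w ≠ 0 with hD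
  have hDne : D.Nonempty := by
    obtain ⟨e, he⟩ := Function.ne_iff.mp hune
    have h2 : (u e).1 ≠ 0 ∨ (u e).2 ≠ 0 := by
      by_contra h
      push_neg at h
      exact he (by rw [Prod.ext_iff]; exact ⟨h.1, h.2⟩)
    rcases h2 with h | h
    · exact ⟨(e, 0), Finset.mem_filter.mpr ⟨Finset.mem_univ _, by simp,
        by rw [ht0]; exact mul_ne_zero (hmono0 e) (pow_ne_zero 2 h)⟩⟩
    · exact ⟨(e, 2), Finset.mem_filter.mpr ⟨Finset.mem_univ _, by simp,
        by rw [ht2]; exact mul_ne_zero (mul_ne_zero (hmono0 e) hAne) (pow_ne_zero 2 h)⟩⟩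
  obtain ⟨w₀, hw₀D, hw₀min⟩ := Finset.exists_min_image D (fun w => v (t w)) hDne
  have hw₀ := Finset.mem_filter.mp hw₀D
  -- cl is injective on diagonal indices
  have hclinj : ∀ w w' : (Fin m → Bool) × Fin 3, w.2 ≠ 1 → w'.2 ≠ 1 → w ≠ w' →
      cl w ≠ cl w' := by
    rintro ⟨e, j⟩ ⟨e', j'⟩ hw hw' hne hcc
    apply hne
    have he : e = e' := funext fun i => by
      have h := congrFun hcc (Fin.castSucc i)
      rwa [hcl_cast, hcl_cast] at h
    have hj : j = j' := by
      have h := congrFun hcc (Fin.last m)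
      rw [hcl_last, hcl_last] at h
      fin_cases j <;> fin_cases j' <;> simp_all
    rw [he, hj]
  -- bound all other terms
  have hbound : ∀ w, w ≠ w₀ → t w = 0 ∨ (t w ≠ 0 ∧ v (t w₀) < v (t w)) := by
    rintro ⟨e, j⟩ hw
    by_cases ht : t (e, j) = 0
    · exact Or.inl ht
    refine Or.inr ⟨ht, ?_⟩
    by_cases hj : j = 1
    · -- cross term
      subst hj
      have hp : (u e).1 ≠ 0 := by
        intro h; exact ht (by rw [ht1, h]; ring)
      have hq : (u e).2 ≠ 0 := by
        intro h; exact ht (by rw [ht1, h]; ring)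
      have h0D : (e, (0:Fin 3)) ∈ D := Finset.mem_filter.mpr ⟨Finset.mem_univ _, by simp,
        by rw [ht0]; exact mul_ne_zero (hmono0 e) (pow_ne_zero 2 hp)⟩
      have h2D : (e, (2:Fin 3)) ∈ D := Finset.mem_filter.mpr ⟨Finset.mem_univ _, by simp,
        by rw [ht2]; exact mul_ne_zero (mul_ne_zero (hmono0 e) hAne) (pow_ne_zero 2 hq)⟩
      have hv0 := hw₀min _ h0D
      have hv2 := hw₀min _ h2D
      have e1 : v (t (e, 1)) = v (mono β e) + v (u e).1 + v (u e).2 := by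
        rw [ht1, hmul _ _ (mul_ne_zero (hmono0 e) hp) hq, hmul _ _ (hmono0 e) hp]
      have e0 : v (t (e, 0)) = v (mono β e) + (v (u e).1 + v (u e).1) := by
        rw [ht0, hmul _ _ (hmono0 e) (pow_ne_zero 2 hp), sq, hmul _ _ hp hp]
      have e2 : v (t (e, 2)) = v (mono β e) + v A + (v (u e).2 + v (u e).2) := by
        rw [ht2, hmul _ _ (mul_ne_zero (hmono0 e) hAne) (pow_ne_zero 2 hq),
          hmul _ _ (hmono0 e) hAne, sq, hmul _ _ hq hq]
      have key : v (t w₀) + v (t w₀) < v (t (e, 1)) + v (t (e, 1)) := by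
        calc v (t w₀) + v (t w₀) ≤ v (t (e, 0)) + v (t (e, 2)) := add_le_add hv0 hv2
          _ < v (t (e, 0)) + v (t (e, 2)) - v A := by
              rw [lt_sub_iff_add_lt]
              have hvA : v A < 0 := by rw [hA_eq]; exact hneg (Fin.last m)
              have h5 := add_lt_add_left hvA (v (t (e, 0)) + v (t (e, 2)))
              simpa using h5
          _ = v (t (e, 1)) + v (t (e, 1)) := by rw [e0, e1, e2]; abel
      by_contra hc
      push_neg at hc
      exact absurd key (not_lt.mpr (add_le_add hc hc))
    · -- diagonal term
      have hwD : (e, j) ∈ D := Finset.mem_filter.mpr ⟨Finset.mem_univ _, hj, ht⟩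
      rcases lt_or_eq_of_le (hw₀min _ hwD) with h | h
      · exact h
      · exfalso
        obtain ⟨γ, hγ⟩ := hclass (e, j) hj ht
        obtain ⟨γ₀, hγ₀⟩ := hclass w₀ hw₀.2.1 hw₀.2.2
        exact hne_of_class _ _ (hclinj w₀ (e, j) hw₀.2.1 hj (Ne.symm hw)) γ₀ γ
          (by rw [← hγ₀, ← hγ, h])
  -- split the sum
  have hsplit : qPf F β A u = t w₀ + ∑ w ∈ Finset.univ.erase w₀, t w := by
    rw [hsum, ← Finset.add_sum_erase _ _ (Finset.mem_univ w₀)]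
  obtain ⟨hne0, hval⟩ := aux_key_sum v hadd (Finset.univ.erase w₀) t (t w₀) hw₀.2.2
    (fun w hw => hbound w (Finset.ne_of_mem_erase hw))
  -- the class of w₀ is nonzero
  have hcl0 : ∃ i, cl w₀ i = true := by
    by_cases hj2 : w₀.2 = 2
    · exact ⟨Fin.last m, by rw [hcl_last, hj2]; simp⟩
    · have hj0 : w₀.2 = 0 := by
        have h1 : (w₀.2 : ℕ) ≠ 1 := fun h => hw₀.2.1 (Fin.ext h)
        have h2 : (w₀.2 : ℕ) ≠ 2 := fun h => hj2 (Fin.ext h)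
        have h3 := w₀.2.isLt
        exact Fin.ext (by omega)
      have hw0eq : w₀ = (w₀.1, (0 : Fin 3)) := Prod.ext rfl hj0
      have htne := hw₀.2.2
      rw [hw0eq, ht0] at htne
      have hp : (u w₀.1).1 ≠ 0 := by
        intro h; exact htne (by rw [h]; ring)
      have hz' : w₀.1 ≠ z := by
        intro h; rw [h, hu0] at hp; exact hp rfl
      obtain ⟨i, hi⟩ := Function.ne_iff.mp hz'
      refine ⟨Fin.castSucc i, ?_⟩
      rw [hcl_cast]
      have : z i = false := rfl
      rw [this] at hi
      exact Bool.ne_false_iff.mp hi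
  obtain ⟨i0, hi0⟩ := hcl0
  obtain ⟨γ₀, hγ₀⟩ := hclass w₀ hw₀.2.1 hw₀.2.2
  refine ⟨u, humem, ?_, ?_⟩
  · rw [hsplit]; exact hne0
  · intro h heq
    rw [hsplit, hval, hγ₀] at heq
    have hfin : S (cl w₀) = 2 • (h - γ₀) := by
      rw [smul_sub, ← heq]
      abel
    exact hind (cl w₀) ⟨i0, hi0⟩ _ hfin
end
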